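/- arXiv:1905.09341 — 4 statements merged into one kernel-verified Lean document; each statement's English description precedes it below -/
import Mathlib

section
/- The risk of bounded perception of player i equals L_i(m^i, u_{-i}) = (1/2) Σ_{j≠i} Σ_{k≠i} (1 - m_j^i)(1 - m_k^i) (1/R_ii^i) R_ij^i R_ik^i u_j u_k. Equivalently, with v_j := (1 - m_j^i) R_ij^i u_j, one has L_i = (Σ_j v_j)^2 / (2 R_ii^i). -/
/-- The risk of bounded perception of player `i`,
`L_i = J^i(BR^i(perceived), u_{-i}) − J^i(BR^i(u_{-i}), u_{-i})`, equals
`(1/2) Σ_{j≠i} Σ_{k≠i} (1−m_j)(1−m_k)(1/R_ii) R_ij R_ik u_j u_k`, and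
equivalently `(Σ_{j≠i} (1−m_j) R_ij u_j)² / (2 R_ii)`. -/
theorem stmt3 (N : ℕ) (i : Fin N) (Rii ri : ℝ) (hRii : 0 < Rii)
    (Rij : Fin N → ℝ) (u : Fin N → ℝ) (m : Fin N → ℝ) :
    let J : ℝ → ℝ := fun a =>
      (1 / 2) * Rii * a ^ 2 - ri * a - ∑ j ∈ Finset.univ.erase i, Rij j * a * u j
    let BR : (Fin N → ℝ) → ℝ := fun v =>
      (1 / Rii) * (∑ j ∈ Finset.univ.erase i, Rij j * v j + ri)
    let L : ℝ := J (BR (fun j => m j * u j)) - J (BR u)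
    L = (1 / 2) * ∑ j ∈ Finset.univ.erase i, ∑ k ∈ Finset.univ.erase i,
          (1 - m j) * (1 - m k) * (1 / Rii) * Rij j * Rij k * u j * u k ∧
    L = (∑ j ∈ Finset.univ.erase i, (1 - m j) * Rij j * u j) ^ 2 / (2 * Rii) := by
  intro J BR L
  set E := Finset.univ.erase i with hE
  set s := ∑ j ∈ E, Rij j * u j with hs
  set t := ∑ j ∈ E, Rij j * (m j * u j) with ht
  set D := ∑ j ∈ E, (1 - m j) * Rij j * u j with hDdef
  have hD : D = s - t := by
    rw [hDdef, hs, ht, ← Finset.sum_sub_distrib]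
    exact Finset.sum_congr rfl (fun j _ => by ring)
  have hSa : ∀ a : ℝ, ∑ j ∈ E, Rij j * a * u j = a * s := by
    intro a
    rw [hs, Finset.mul_sum]
    exact Finset.sum_congr rfl (fun j _ => by ring)
  have hRne : Rii ≠ 0 := ne_of_gt hRii
  have hL : L = D ^ 2 / (2 * Rii) := by
    show J ((1/Rii) * (t + ri)) - J ((1/Rii) * (s + ri)) = D ^ 2 / (2 * Rii)
    simp only [J, ← hE, hSa, hD]
    field_simp
    ring
  refine ⟨?_, hL⟩
  rw [hL]
  have hsum := Finset.sum_mul_sum E E (fun j => (1 - m j) * Rij j * u j)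
      (fun k => (1 / Rii) * ((1 - m k) * Rij k * u k))
  have : ∑ j ∈ E, ∑ k ∈ E,
      (1 - m j) * (1 - m k) * (1 / Rii) * Rij j * Rij k * u j * u k
      = D * ((1 / Rii) * D) := by
    calc ∑ j ∈ E, ∑ k ∈ E,
          (1 - m j) * (1 - m k) * (1 / Rii) * Rij j * Rij k * u j * u k
        = ∑ j ∈ E, ∑ k ∈ E,
            (1 - m j) * Rij j * u j * ((1 / Rii) * ((1 - m k) * Rij k * u k)) :=
          Finset.sum_congr rfl (fun j _ => Finset.sum_congr rfl (fun k _ => by ring))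
      _ = D * ∑ k ∈ E, (1 / Rii) * ((1 - m k) * Rij k * u k) := hsum.symm
      _ = D * ((1 / Rii) * D) := by rw [← Finset.mul_sum]
  rw [this]
  field_simp
end

section
/- Let C = [0,1] ⊂ ℝ, let f₂(l) = α|l| with α > 0, and let f₃ = ι_C be the indicator function of C (0 on C, +∞ otherwise). Then for every λ > 0 and every x ∈ ℝ, prox_{λ(f₂ + f₃)}(x) = proj_C(prox_{λ f₂}(x)), i.e., the proximal operator of the sum equals the projection onto C composed with the soft-thresholding operator. -/
/-- For `C = [0,1]`, `f₂(l) = α|l|` (`α > 0`), `f₃ = ι_C`, and any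
`λ > 0`, `x ∈ ℝ`: the proximal point of `f₂ + f₃` at `x` — i.e. the unique
minimizer of `α|l| + (1/(2λ))(l−x)²` over `C` — equals the projection onto `C`
of the soft-thresholding value `prox_{λ f₂}(x)`. -/
theorem stmt7 (α lam x : ℝ) (hα : 0 < α) (hlam : 0 < lam) :
    let f : ℝ → ℝ := fun l => α * |l| + (1 / (2 * lam)) * (l - x) ^ 2
    let s : ℝ := max (x - lam * α) 0 - max (-x - lam * α) 0  -- prox_{λ f₂}(x)
    let p : ℝ := max 0 (min s 1)                             -- proj_C (s)
    p ∈ Set.Icc (0 : ℝ) 1 ∧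
    (∀ l ∈ Set.Icc (0 : ℝ) 1, l ≠ p → f p < f l) := by
  intro f s p
  set t : ℝ := x - lam * α with ht
  have hla : 0 < lam * α := mul_pos hlam hα
  -- characterize p
  have hcase : (p = 0 ∧ t ≤ 0) ∨ (p = t ∧ 0 ≤ t ∧ t ≤ 1) ∨ (p = 1 ∧ 1 ≤ t) := by
    rcases le_or_gt t 0 with h | h
    · left
      refine ⟨?_, h⟩
      have h1 : max (x - lam * α) 0 = 0 := max_eq_right h
      have h2 : 0 ≤ max (-x - lam * α) 0 := le_max_right _ _
      have hs : s ≤ 0 := by simp only [s, h1]; linarith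
      have : min s 1 = s := min_eq_left (by linarith)
      simp only [p, this]
      exact max_eq_left hs
    · have hxn : -x - lam * α < 0 := by linarith
      have h2 : max (-x - lam * α) 0 = 0 := max_eq_right hxn.le
      have h1 : max (x - lam * α) 0 = t := max_eq_left h.le
      have hs : s = t := by simp [s, h1, h2]
      rcases le_or_gt t 1 with h3 | h3
      · right; left
        refine ⟨?_, h.le, h3⟩
        simp only [p, hs]
        rw [min_eq_left h3, max_eq_right h.le]
      · right; right
        refine ⟨?_, h3.le⟩
        simp only [p, hs]
        rw [min_eq_right h3.le, max_eq_right zero_le_one]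
  have hp0 : 0 ≤ p := le_max_left _ _
  have hp1 : p ≤ 1 := by
    rcases hcase with ⟨hp, _⟩ | ⟨hp, _, h1⟩ | ⟨hp, _⟩ <;> rw [hp] <;> linarith
  refine ⟨⟨hp0, hp1⟩, ?_⟩
  intro l hl hlp
  obtain ⟨hl0, hl1⟩ := hl
  -- projection property: (p - t)^2 < (l - t)^2
  have hsq : (p - t) ^ 2 < (l - t) ^ 2 := by
    rcases hcase with ⟨hp, h⟩ | ⟨hp, h0, h1⟩ | ⟨hp, h⟩
    · have hlpos : 0 < l := lt_of_le_of_ne hl0 (by rw [hp] at hlp; exact Ne.symm hlp)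
      rw [hp]; nlinarith
    · rw [hp]; have : l ≠ t := by rw [hp] at hlp; exact hlp
      have : (l - t) ≠ 0 := sub_ne_zero.mpr this
      simpa using (pow_pos (abs_pos.mpr this) 2).trans_le (by rw [sq_abs])
    · have hlt : l < 1 := lt_of_le_of_ne hl1 (by rw [hp] at hlp; exact hlp)
      rw [hp]; nlinarith
  have e : ∀ y : ℝ, 0 ≤ y → f y = α * y + (1 / (2 * lam)) * (y - x) ^ 2 := by
    intro y hy; simp [f, abs_of_nonneg hy]
  rw [e p hp0, e l hl0]
  have key2 : 2 * lam * α * p + (p - x) ^ 2 < 2 * lam * α * l + (l - x) ^ 2 := by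
    nlinarith [hsq]
  have hinv : (0:ℝ) < 1 / (2 * lam) := by positivity
  have ep : α * p + (1 / (2 * lam)) * (p - x) ^ 2
      = (1 / (2 * lam)) * (2 * lam * α * p + (p - x) ^ 2) := by
    field_simp
  have el : α * l + (1 / (2 * lam)) * (l - x) ^ 2
      = (1 / (2 * lam)) * (2 * lam * α * l + (l - x) ^ 2) := by
    field_simp
  rw [ep, el]
  exact mul_lt_mul_of_pos_left key2 hinv
end

section
/- Let λ > 0 and L > 0 with λ < 1/L. Suppose f₁ is differentiable with L-Lipschitz gradient and v minimizes x ↦ ⟨∇f₁(x_k), x − x_k⟩ + (1/(2λ))‖x − x_k‖² + g(x) over a set containing x_k, where g is proper. Then f₁(v) + g(v) ≤ f₁(x_k) + g(x_k) − (1/(2λ) − L/2)‖v − x_k‖². -/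
open scoped RealInnerProductSpace in
/-- Descent lemma for an `L`-Lipschitz gradient. -/
theorem descent_lemma_aux {E : Type*} [NormedAddCommGroup E] [InnerProductSpace ℝ E]
    [CompleteSpace E]
    (f₁ : E → ℝ) (gradf : E → E) (L : ℝ) (hL : 0 ≤ L)
    (hgrad : ∀ x, HasGradientAt f₁ (gradf x) x)
    (hlip : ∀ x y, ‖gradf x - gradf y‖ ≤ L * ‖x - y‖)
    (xk v : E) :
    f₁ v ≤ f₁ xk + ⟪gradf xk, v - xk⟫ + L / 2 * ‖v - xk‖ ^ 2 := by
  set d := v - xk with hd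
  have hcont : Continuous gradf := by
    have hlw : LipschitzWith (Real.toNNReal L) gradf :=
      LipschitzWith.of_dist_le_mul (fun x y => by
        rw [dist_eq_norm, dist_eq_norm, Real.coe_toNNReal L hL]; exact hlip x y)
    exact hlw.continuous
  have hline : ∀ t : ℝ, HasDerivAt (fun t : ℝ => f₁ (xk + t • d))
      ⟪gradf (xk + t • d), d⟫ t := by
    intro t
    have h1 : HasDerivAt (fun t : ℝ => xk + t • d) d t := by
      simpa using ((hasDerivAt_id t).smul_const d).const_add xk
    have h2 := (hgrad (xk + t • d)).hasFDerivAt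
    have := h2.comp_hasDerivAt t h1
    simp at this; exact this
  have hφcont : Continuous fun t : ℝ => ⟪gradf (xk + t • d), d⟫ :=
    (hcont.comp (by continuity)).inner continuous_const
  have hint : IntervalIntegrable (fun t : ℝ => ⟪gradf (xk + t • d), d⟫)
      MeasureTheory.volume 0 1 := hφcont.intervalIntegrable 0 1
  have hFTC : ∫ t in (0:ℝ)..1, ⟪gradf (xk + t • d), d⟫ = f₁ v - f₁ xk := by
    have := intervalIntegral.integral_eq_sub_of_hasDerivAt
      (f := fun t : ℝ => f₁ (xk + t • d)) (f' := fun t => ⟪gradf (xk + t • d), d⟫)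
      (fun t _ => hline t) hint
    simpa [hd] using this
  have hbound : ∫ t in (0:ℝ)..1, ⟪gradf (xk + t • d), d⟫ ≤
      ∫ t in (0:ℝ)..1, (⟪gradf xk, d⟫ + L * t * ‖d‖ ^ 2) := by
    apply intervalIntegral.integral_mono_on (by norm_num) hint
    · exact Continuous.intervalIntegrable (by continuity) 0 1
    · intro t ht
      have h1 : ⟪gradf (xk + t • d), d⟫ - ⟪gradf xk, d⟫
          = ⟪gradf (xk + t • d) - gradf xk, d⟫ := by
        rw [inner_sub_left]
      have h2 : ⟪gradf (xk + t • d) - gradf xk, d⟫ ≤ ‖gradf (xk + t • d) - gradf xk‖ * ‖d‖ :=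
        real_inner_le_norm _ _
      have h3 : ‖gradf (xk + t • d) - gradf xk‖ ≤ L * (t * ‖d‖) := by
        have := hlip (xk + t • d) xk
        simpa [norm_smul, abs_of_nonneg ht.1] using this
      have h4 : ‖gradf (xk + t • d) - gradf xk‖ * ‖d‖ ≤ L * t * ‖d‖ ^ 2 := by
        have := mul_le_mul_of_nonneg_right h3 (norm_nonneg d)
        nlinarith [norm_nonneg d]
      linarith
  have hI : ∫ t in (0:ℝ)..1, (⟪gradf xk, d⟫ + L * t * ‖d‖ ^ 2)
      = ⟪gradf xk, d⟫ + L / 2 * ‖d‖ ^ 2 := by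
    rw [intervalIntegral.integral_add (intervalIntegrable_const)
      (Continuous.intervalIntegrable (by continuity) 0 1)]
    simp only [intervalIntegral.integral_const, smul_eq_mul]
    have : ∫ t in (0:ℝ)..1, L * t * ‖d‖ ^ 2 = L / 2 * ‖d‖ ^ 2 := by
      have : (fun t : ℝ => L * t * ‖d‖ ^ 2) = fun t : ℝ => (L * ‖d‖ ^ 2) * t := by
        funext t; ring
      rw [this, intervalIntegral.integral_const_mul, integral_id]
      ring
    rw [this]; ring
  have := hFTC ▸ hbound
  rw [hI] at this
  linarith

open scoped RealInnerProductSpace in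
/-- Descent inequality for the proximal step. If `f₁` has an
`L`-Lipschitz gradient, `0 < λ < 1/L`, and `v` minimizes
`x ↦ ⟨∇f₁(x_k), x − x_k⟩ + (1/(2λ))‖x − x_k‖² + g(x)` over a set `s` containing
`x_k`, then `f₁(v) + g(v) ≤ f₁(x_k) + g(x_k) − (1/(2λ) − L/2)‖v − x_k‖²`. -/
theorem stmt15 {E : Type*} [NormedAddCommGroup E] [InnerProductSpace ℝ E] [CompleteSpace E]
    (f₁ : E → ℝ) (gradf : E → E) (g : E → ℝ) (L lam : ℝ)
    (hL : 0 < L) (hlam0 : 0 < lam) (hlam : lam < 1 / L)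
    (hgrad : ∀ x, HasGradientAt f₁ (gradf x) x)
    (hlip : ∀ x y, ‖gradf x - gradf y‖ ≤ L * ‖x - y‖)
    (s : Set E) (xk v : E) (hxk : xk ∈ s) (hv : v ∈ s)
    (hmin : ∀ x ∈ s,
      ⟪gradf xk, v - xk⟫ + (1 / (2 * lam)) * ‖v - xk‖ ^ 2 + g v ≤
      ⟪gradf xk, x - xk⟫ + (1 / (2 * lam)) * ‖x - xk‖ ^ 2 + g x) :
    f₁ v + g v ≤ f₁ xk + g xk - (1 / (2 * lam) - L / 2) * ‖v - xk‖ ^ 2 := by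
  have hdesc := descent_lemma_aux f₁ gradf L hL.le hgrad hlip xk v
  have hm := hmin xk hxk
  simp only [sub_self, inner_zero_right, norm_zero] at hm
  have : (0:ℝ) ^ 2 = 0 := by norm_num
  rw [this] at hm
  linarith
end

section
/- Let {r_k} be a nonincreasing sequence of positive reals, θ ∈ (0, 1/2), κ > 0, d₁ > 0, satisfying 1 ≤ d₁ κ² r_k^{2(θ−1)} (r_{k−1} − r_k) for all k > k₀. Then there exists d₂ > 0 (depending on κ, θ, d₁, r_{k₀}) such that r_k ≤ (κ / (d₂ (k − k₀)(1 − 2θ)))^{1/(1−2θ)} for all k > k₀; in particular r_k → 0 at a sublinear polynomial rate. -/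
set_option maxHeartbeats 1000000


/-- Rate extraction from the KL inequality. If `{r_k}` is a
nonincreasing sequence of positive reals with
`1 ≤ d₁ κ² r_k^{2(θ−1)} (r_{k−1} − r_k)` for all `k > k₀`, where `θ ∈ (0,1/2)`,
`κ > 0`, `d₁ > 0`, then there is `d₂ > 0` such that
`r_k ≤ (κ/(d₂ (k−k₀)(1−2θ)))^{1/(1−2θ)}` for all `k > k₀`; in particular
`r_k → 0`. -/
theorem stmt16 (r : ℕ → ℝ) (hmono : Antitone r) (hpos : ∀ k, 0 < r k)
    (θ κ d₁ : ℝ) (hθ0 : 0 < θ) (hθ1 : θ < 1 / 2) (hκ : 0 < κ) (hd₁ : 0 < d₁)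
    (k₀ : ℕ)
    (hKL : ∀ k, k₀ < k →
      1 ≤ d₁ * κ ^ 2 * r k ^ (2 * (θ - 1)) * (r (k - 1) - r k)) :
    (∃ d₂ : ℝ, 0 < d₂ ∧ ∀ k, k₀ < k →
      r k ≤ (κ / (d₂ * ((k : ℝ) - (k₀ : ℝ)) * (1 - 2 * θ))) ^ (1 / (1 - 2 * θ))) ∧
    Filter.Tendsto r Filter.atTop (nhds 0) := by
  set β : ℝ := 1 - 2 * θ with hβdef
  have hβ : 0 < β := by rw [hβdef]; linarith
  have hβ1 : β ≤ 1 := by rw [hβdef]; linarith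
  set D : ℝ := 1 / (d₁ * κ ^ 2) with hDdef
  have hD : 0 < D := by rw [hDdef]; positivity
  have h2β : (2:ℝ) ^ (-β) < 1 :=
    Real.rpow_lt_one_of_one_lt_of_neg (by norm_num) (by linarith)
  have h2βpos : (0:ℝ) < (2:ℝ) ^ (-β) := Real.rpow_pos_of_pos (by norm_num) _
  set c : ℝ := min (β * D / 2) ((r k₀) ^ (-β) * (1 - (2:ℝ) ^ (-β))) with hcdef
  have hrk0 : (0:ℝ) < (r k₀) ^ (-β) := Real.rpow_pos_of_pos (hpos k₀) _
  have hc : 0 < c := by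
    apply lt_min
    · positivity
    · have : (0:ℝ) < 1 - (2:ℝ) ^ (-β) := by linarith
      positivity
  -- step inequality
  have step : ∀ k, k₀ < k → (r (k-1)) ^ (-β) + c ≤ (r k) ^ (-β) := by
    intro k hk
    set b := r k with hb'
    set a := r (k-1) with ha'
    have hb : 0 < b := hpos k
    have ha : 0 < a := hpos _
    have hba : b ≤ a := hmono (by omega)
    have hak0 : b ≤ r k₀ := hmono (by omega)
    have hB : (0:ℝ) < b ^ β := Real.rpow_pos_of_pos hb _
    have hA : (0:ℝ) < a ^ β := Real.rpow_pos_of_pos ha _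
    have hexp : 2 * (θ - 1) = -(1 + β) := by rw [hβdef]; ring
    have hKLk := hKL k hk
    rw [hexp, Real.rpow_neg hb.le] at hKLk
    have hbp : (0:ℝ) < b ^ (1+β) := Real.rpow_pos_of_pos hb _
    have hgap : D * (b * b ^ β) ≤ a - b := by
      have h1 : b ^ (1+β) ≤ d₁ * κ ^ 2 * (a - b) := by
        have h2 := mul_le_mul_of_nonneg_left hKLk hbp.le
        rw [mul_one] at h2
        calc b ^ (1+β) ≤ b ^ (1+β) * (d₁ * κ ^ 2 * (b ^ (1+β))⁻¹ * (a - b)) := h2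
          _ = d₁ * κ ^ 2 * (a - b) := by field_simp
      have hsplit : b ^ (1+β) = b * b ^ β := by
        rw [Real.rpow_add hb, Real.rpow_one]
      rw [← hsplit, hDdef]
      rw [div_mul_eq_mul_div, one_mul, div_le_iff₀ (by positivity)]
      nlinarith [h1]
    have hnegb : b ^ (-β) = (b ^ β)⁻¹ := Real.rpow_neg hb.le _
    have hnega : a ^ (-β) = (a ^ β)⁻¹ := Real.rpow_neg ha.le _
    by_cases hcase : a ≤ 2 * b
    · -- Bernoulli case
      have hs : -1 ≤ b / a - 1 := by
        have : 0 < b / a := by positivity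
        linarith
      have hBern := rpow_one_add_le_one_add_mul_self hs hβ.le hβ1
      rw [show (1 : ℝ) + (b / a - 1) = b / a by ring] at hBern
      have hBern2 : b ^ β ≤ a ^ β * (1 + β * (b / a - 1)) := by
        have hdr : (b / a) ^ β = b ^ β / a ^ β := Real.div_rpow hb.le ha.le β
        rw [hdr] at hBern
        calc b ^ β = (b ^ β / a ^ β) * a ^ β := by field_simp
          _ ≤ (1 + β * (b / a - 1)) * a ^ β :=
              mul_le_mul_of_nonneg_right hBern hA.le
          _ = a ^ β * (1 + β * (b / a - 1)) := by ring
      have key : β * a ^ β * (a - b) ≤ a * (a ^ β - b ^ β) := by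
        have h3 := mul_le_mul_of_nonneg_left hBern2 ha.le
        have hexpand : a * (a ^ β * (1 + β * (b / a - 1)))
            = a * a ^ β + β * a ^ β * (b - a) := by
          field_simp
        rw [hexpand] at h3
        nlinarith [h3]
      have hcle : c ≤ β * D / 2 := min_le_left _ _
      rw [hnega, hnegb, ← sub_nonneg]
      have hdiff : (b ^ β)⁻¹ - ((a ^ β)⁻¹ + c)
          = ((a ^ β - b ^ β) - c * (a ^ β * b ^ β)) / (a ^ β * b ^ β) := by
        field_simp; ring
      rw [hdiff]
      apply div_nonneg _ (by positivity)
      have hab2 : a / 2 ≤ b := by linarith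
      have t1 : β * a ^ β * (D * (b * b ^ β)) ≤ β * a ^ β * (a - b) :=
        mul_le_mul_of_nonneg_left hgap (by positivity)
      have t2 : β * a ^ β * D * b ^ β * (a / 2) ≤ β * a ^ β * D * b ^ β * b :=
        mul_le_mul_of_nonneg_left hab2 (by positivity)
      have t3 : a * (c * (a ^ β * b ^ β)) ≤ a * (β * D / 2 * (a ^ β * b ^ β)) := by
        have := mul_le_mul_of_nonneg_right hcle (by positivity : (0:ℝ) ≤ a ^ β * b ^ β)
        nlinarith [this]
      have t5 : a * (c * (a ^ β * b ^ β)) ≤ a * (a ^ β - b ^ β) := by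
        calc a * (c * (a ^ β * b ^ β))
            ≤ a * (β * D / 2 * (a ^ β * b ^ β)) := t3
          _ = β * a ^ β * D * b ^ β * (a / 2) := by ring
          _ ≤ β * a ^ β * D * b ^ β * b := t2
          _ = β * a ^ β * (D * (b * b ^ β)) := by ring
          _ ≤ β * a ^ β * (a - b) := t1
          _ ≤ a * (a ^ β - b ^ β) := key
      have := le_of_mul_le_mul_left t5 ha
      linarith
    · -- halving case
      push_neg at hcase
      have hcle : c ≤ (r k₀) ^ (-β) * (1 - (2:ℝ) ^ (-β)) := min_le_right _ _
      have h4 : (r k₀) ^ (-β) ≤ b ^ (-β) :=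
        Real.rpow_le_rpow_of_nonpos hb hak0 (by linarith : -β ≤ 0)
      have h5 : a ^ (-β) ≤ (2 * b) ^ (-β) :=
        Real.rpow_le_rpow_of_nonpos (by positivity) (by linarith) (by linarith)
      have h6 : (2 * b) ^ (-β) = (2:ℝ) ^ (-β) * b ^ (-β) :=
        Real.mul_rpow (by norm_num) hb.le
      have hbnegpos : (0:ℝ) < b ^ (-β) := Real.rpow_pos_of_pos hb _
      nlinarith [h4, h5, h6, hcle]
  -- telescoping
  have tel : ∀ k, k₀ < k → c * ((k:ℝ) - (k₀:ℝ)) ≤ (r k) ^ (-β) := by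
    intro k hk
    have hk' : k₀ + 1 ≤ k := hk
    induction k, hk' using Nat.le_induction with
    | base =>
      have h := step (k₀+1) (Nat.lt_succ_self k₀)
      simp only [Nat.add_sub_cancel] at h
      push_cast
      linarith [hrk0.le]
    | succ n hn ih =>
      have h := step (n+1) (by omega)
      simp only [Nat.add_sub_cancel] at h
      have ih' := ih (by omega)
      push_cast
      push_cast at ih'
      linarith
  -- the clean bound
  have hbound : ∀ k, k₀ < k →
      r k ≤ ((c * ((k:ℝ) - (k₀:ℝ)))⁻¹) ^ (1/β) := by
    intro k hk
    have hb : 0 < r k := hpos k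
    have hN : (1:ℝ) ≤ (k:ℝ) - (k₀:ℝ) := by
      have : (k₀:ℝ) + 1 ≤ (k:ℝ) := by exact_mod_cast hk
      linarith
    have ht : 0 < c * ((k:ℝ) - (k₀:ℝ)) := by positivity
    have h1 := Real.rpow_le_rpow_of_nonpos ht (tel k hk)
      (by rw [neg_nonpos]; positivity : -(1/β) ≤ 0)
    have hβ0 : β ≠ 0 := ne_of_gt hβ
    have h2 : (r k ^ (-β)) ^ (-(1/β)) = r k := by
      rw [← Real.rpow_mul hb.le, show -β * -(1/β) = 1 by field_simp, Real.rpow_one]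
    have h3 : (c * ((k:ℝ) - (k₀:ℝ))) ^ (-(1/β))
        = ((c * ((k:ℝ) - (k₀:ℝ)))⁻¹) ^ (1/β) := by
      rw [Real.rpow_neg ht.le, Real.inv_rpow ht.le]
    rw [h2, h3] at h1
    exact h1
  constructor
  · refine ⟨c * κ / β, by positivity, fun k hk => ?_⟩
    have hN : (1:ℝ) ≤ (k:ℝ) - (k₀:ℝ) := by
      have : (k₀:ℝ) + 1 ≤ (k:ℝ) := by exact_mod_cast hk
      linarith
    have heq : κ / (c * κ / β * ((k:ℝ) - (k₀:ℝ)) * β)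
        = (c * ((k:ℝ) - (k₀:ℝ)))⁻¹ := by
      field_simp
    rw [heq]
    exact hbound k hk
  · -- tendsto
    have hT : Filter.Tendsto (fun k : ℕ => c * ((k:ℝ) - (k₀:ℝ)))
        Filter.atTop Filter.atTop := by
      apply Filter.Tendsto.const_mul_atTop hc
      exact Filter.tendsto_atTop_add_const_right _ _ tendsto_natCast_atTop_atTop
    have hT2 : Filter.Tendsto (fun k : ℕ => (c * ((k:ℝ) - (k₀:ℝ)))⁻¹)
        Filter.atTop (nhds 0) := hT.inv_tendsto_atTop
    have hT3 : Filter.Tendsto (fun k : ℕ => ((c * ((k:ℝ) - (k₀:ℝ)))⁻¹) ^ (1/β))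
        Filter.atTop (nhds 0) := by
      have := hT2.rpow_const (p := 1/β) (Or.inr (by positivity))
      rwa [Real.zero_rpow (by positivity : (1:ℝ)/β ≠ 0)] at this
    apply tendsto_of_tendsto_of_tendsto_of_le_of_le' tendsto_const_nhds hT3
    · exact Filter.Eventually.of_forall fun k => (hpos k).le
    · filter_upwards [Filter.eventually_gt_atTop k₀] with k hk
      exact hbound k hk
end
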